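/- Let H be a finite group, p a prime, and P = ⟨x⟩ a Sylow p-subgroup of H that is contained in the center of H. Let M be a finite cyclic group and e ≥ 1 an integer with p^e dividing both |M| and |P|. Let X be the set of group homomorphisms σ : H → M such that σ(x) has order p^e and σ(y) = 1 for every element y ∈ H whose order is coprime to p. Then X is nonempty and the automorphism group Aut(H), acting on X by precomposition β·σ = σ∘β, acts transitively on X. -/

import Mathlib

/-- The set of homomorphisms `σ : H → M` such that `σ x` has order `p ^ e` and `σ` kills
every element of `H` of order coprime to `p`. -/
def actSet {H M : Type*} [Group H] [CommGroup M] (p e : ℕ) (x : H) : Set (H →* M) :=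
  {σ | orderOf (σ x) = p ^ e ∧ ∀ y : H, Nat.Coprime (orderOf y) p → σ y = 1}

/-- Let `H` be a finite group, `p` a prime, and `P = ⟨x⟩` a central Sylow
`p`-subgroup of `H`. Let `M` be a finite cyclic group and `e ≥ 1` with `p^e` dividing `|M|`
and `|P|`. Then the set `X` of homomorphisms `σ : H → M` with `σ x` of order `p^e` killing
all elements of order coprime to `p` is nonempty, and `Aut(H)` acts transitively on `X`
by precomposition. -/
theorem aut_transitive_on_actions_of_central_sylow {H : Type*} [Group H] [Finite H]
    (p : ℕ) (hp : p.Prime)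
    (x : H) (P : Sylow p H) (hP : (P : Subgroup H) = Subgroup.zpowers x)
    (hcentral : (P : Subgroup H) ≤ Subgroup.center H)
    {M : Type*} [CommGroup M] [Finite M] (hM : IsCyclic M)
    (e : ℕ) (he : 1 ≤ e)
    (hdM : p ^ e ∣ Nat.card M) (hdP : p ^ e ∣ Nat.card ↥(P : Subgroup H)) :
    (actSet p e x : Set (H →* M)).Nonempty ∧
    ∀ σ ∈ (actSet p e x : Set (H →* M)), ∀ ω ∈ (actSet p e x : Set (H →* M)),
      ∃ β : MulAut H, ω = σ.comp β.toMonoidHom := by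
  classical
  haveI := Fact.mk hp
  haveI := hM
  set N := Nat.card H with hN
  have hN0 : N ≠ 0 := Nat.card_pos.ne'
  set k := N.factorization p with hk
  set n' := N / p ^ k with hn'
  have hNsplit : p ^ k * n' = N := Nat.ordProj_mul_ordCompl_eq_self N p
  have hpn' : ¬ p ∣ n' := Nat.not_dvd_ordCompl hp hN0
  have hcopn' : Nat.Coprime n' p :=
    Nat.coprime_comm.mp ((Nat.Prime.coprime_iff_not_dvd hp).mpr hpn')
  -- cardinality of P
  have hcardP : Nat.card ↥(P : Subgroup H) = p ^ k := P.card_eq_multiplicity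
  have hxP : x ∈ (P : Subgroup H) := hP ▸ Subgroup.mem_zpowers x
  have hordx : orderOf x = p ^ k := by
    rw [← Nat.card_zpowers, ← hP, hcardP]
  have hek : e ≤ k := by
    have h1 : p ^ e ∣ N := hdP.trans (P : Subgroup H).card_subgroup_dvd_card
    exact (Nat.Prime.pow_dvd_iff_le_factorization hp hN0).mp h1
  have hk1 : 1 ≤ k := le_trans he hek
  have hpk1 : 1 < p ^ k := Nat.one_lt_pow (by omega) hp.one_lt
  have hpe1 : 1 < p ^ e := Nat.one_lt_pow (by omega) hp.one_lt
  -- index of the center is coprime to p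
  set n₀ := (Subgroup.center H).index with hn₀
  have hpn₀ : ¬ p ∣ n₀ := by
    intro hdvd
    have h1 : p ^ k ∣ Nat.card (Subgroup.center H) :=
      hcardP ▸ Subgroup.card_dvd_of_le hcentral
    have h2 : p ^ (k + 1) ∣ N := by
      have h3 : Nat.card (Subgroup.center H) * n₀ = N := Subgroup.card_mul_index _
      obtain ⟨a, ha⟩ := h1
      obtain ⟨b, hb⟩ := hdvd
      rw [← h3, ha, hb, pow_succ]
      exact ⟨a * b, by ring⟩
    exact Nat.pow_succ_factorization_not_dvd hN0 hp h2
  -- choose the exponent t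
  have hcopt : Nat.Coprime (n₀ * n') (p ^ k) := by
    refine Nat.Coprime.pow_right k (Nat.Coprime.mul ?_ hcopn')
    exact Nat.coprime_comm.mp ((Nat.Prime.coprime_iff_not_dvd hp).mpr hpn₀)
  obtain ⟨c, -, hc⟩ := Nat.exists_mul_mod_eq_one_of_coprime hcopt hpk1
  set t := n₀ * (n' * c) with ht
  have ht_mod : t % p ^ k = 1 := by rw [ht, ← mul_assoc]; exact hc
  have ht1 : 1 ≤ t := by
    rcases Nat.eq_zero_or_pos t with h | h
    · rw [h] at ht_mod; simp at ht_mod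
    · exact h
  have htk : p ^ k ∣ t - 1 := by
    have h1 := Nat.div_add_mod t (p ^ k)
    rw [ht_mod] at h1
    exact ⟨t / p ^ k, by omega⟩
  have htn' : n' ∣ t := ⟨n₀ * c, by rw [ht]; ring⟩
  -- the `t`-th power map is an endomorphism with image in the center
  have hcenterpow : ∀ h : H, h ^ t ∈ Subgroup.center H := by
    intro h
    have h1 : h ^ n₀ ∈ Subgroup.center H := (Subgroup.center H).pow_index_mem h
    rw [ht, pow_mul]
    exact Subgroup.pow_mem _ h1 _
  have hmul : ∀ g h : H, (g * h) ^ t = g ^ t * h ^ t := by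
    intro g h
    letI : CommGroup ↥(Subgroup.center H) := { (Subgroup.center H).toGroup with mul_comm := mul_comm' }
    have h1 := congrArg (fun z : ↥(Subgroup.center H) => (z : H))
      (map_mul ((powMonoidHom (n' * c)).comp (MonoidHom.transferCenterPow H)) g h)
    simpa [powMonoidHom, MonoidHom.transferCenterPow, ht, pow_mul] using h1
  -- P is normal, hence the unique Sylow p-subgroup
  have hnormal : (P : Subgroup H).Normal := by
    constructor
    intro n hn g
    have h1 := (Subgroup.mem_center_iff.mp (hcentral hn) g)
    rw [h1, mul_assoc, mul_inv_cancel, mul_one]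
    exact hn
  haveI hu : Unique (Sylow p H) := P.unique_of_normal hnormal
  -- every p-element lies in P; in particular all `t`-th powers do
  have hmemP : ∀ h : H, h ^ t ∈ (P : Subgroup H) := by
    intro h
    have hord : (h ^ t) ^ p ^ k = 1 := by
      rw [← pow_mul]
      apply orderOf_dvd_iff_pow_eq_one.mp
      calc orderOf h ∣ N := orderOf_dvd_natCard h
        _ = p ^ k * n' := hNsplit.symm
        _ ∣ t * p ^ k := by
            obtain ⟨s, hs⟩ := htn'
            exact ⟨s, by rw [hs]; ring⟩
    have hL : IsPGroup p (Subgroup.zpowers (h ^ t)) := by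
      intro g
      refine ⟨k, ?_⟩
      obtain ⟨i, hi⟩ := Subgroup.mem_zpowers_iff.mp g.2
      apply Subtype.ext
      push_cast
      rw [← hi, ← zpow_natCast, ← zpow_mul, mul_comm i _, zpow_mul, zpow_natCast, hord, one_zpow]
    obtain ⟨Q, hQ⟩ := hL.exists_le_sylow
    have hQP : Q = P := Subsingleton.elim Q P
    have h2 := hQ (Subgroup.mem_zpowers (h ^ t))
    rw [hQP] at h2
    exact h2
  -- elements of P are fixed by the t-th power map
  have hfixP : ∀ a ∈ (P : Subgroup H), a ^ t = a := by
    intro a ha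
    have h1 : orderOf a ∣ p ^ k := hcardP ▸ (P : Subgroup H).orderOf_dvd_natCard ha
    have h2 : a ^ (t - 1) = 1 := orderOf_dvd_iff_pow_eq_one.mp (h1.trans htk)
    calc a ^ t = a ^ (t - 1 + 1) := by rw [Nat.sub_add_cancel ht1]
      _ = a ^ (t - 1) * a := by rw [pow_succ]
      _ = a := by rw [h2, one_mul]
  -- elements of order coprime to p are killed by the t-th power map
  have hkill : ∀ y : H, Nat.Coprime (orderOf y) p → y ^ t = 1 := by
    intro y hy
    have h1 : orderOf y ∣ p ^ k * n' := hNsplit ▸ orderOf_dvd_natCard y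
    have h2 : Nat.Coprime (orderOf y) (p ^ k) := hy.pow_right k
    have h3 : orderOf y ∣ n' := Nat.Coprime.dvd_of_dvd_mul_left h2 h1
    exact orderOf_dvd_iff_pow_eq_one.mp (h3.trans htn')
  -- the "coprime part" of any element has order coprime to p
  have hcoprimePart : ∀ h : H, Nat.Coprime (orderOf (h * (h ^ t)⁻¹)) p := by
    intro h
    have hc : Commute h ((h ^ t)⁻¹) := (Commute.pow_self h t).symm.inv_right
    have hpow : h ^ (t * n') = h ^ n' := by
      refine pow_eq_pow_iff_modEq.mpr (Nat.ModEq.symm ?_)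
      refine (Nat.modEq_iff_dvd' (Nat.le_mul_of_pos_left n' (by omega))).mpr ?_
      have h4 : t * n' - n' = (t - 1) * n' := by rw [Nat.sub_mul, one_mul]
      rw [h4]
      calc orderOf h ∣ p ^ k * n' := hNsplit ▸ orderOf_dvd_natCard h
        _ ∣ (t - 1) * n' := mul_dvd_mul_right htk n'
    have h1 : (h * (h ^ t)⁻¹) ^ n' = 1 := by
      have h2 : ((h ^ t)⁻¹) ^ n' = (h ^ (t * n'))⁻¹ := by rw [inv_pow, ← pow_mul]
      rw [hc.mul_pow, h2, hpow, mul_inv_cancel]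
    have h3 : orderOf (h * (h ^ t)⁻¹) ∣ n' := orderOf_dvd_iff_pow_eq_one.mpr h1
    exact Nat.Coprime.coprime_dvd_left h3 hcopn'
  -- members of `actSet` are determined by their values on `P`
  have hvalue : ∀ σ : H →* M, σ ∈ actSet p e x → ∀ h : H, σ h = σ (h ^ t) := by
    intro σ hσ h
    have h1 : σ (h * (h ^ t)⁻¹) = 1 := hσ.2 _ (hcoprimePart h)
    calc σ h = σ ((h * (h ^ t)⁻¹) * h ^ t) := by rw [inv_mul_cancel_right]
      _ = σ (h * (h ^ t)⁻¹) * σ (h ^ t) := map_mul σ _ _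
      _ = σ (h ^ t) := by rw [h1, one_mul]
  -- ## Nonemptiness
  set n := Nat.card ↥(P : Subgroup H) with hn
  haveI : NeZero n := ⟨Nat.card_pos.ne'⟩
  have hPcyc : IsCyclic ↥(P : Subgroup H) := by
    refine ⟨⟨⟨x, hxP⟩, fun a => ?_⟩⟩
    have ha : (a : H) ∈ Subgroup.zpowers x := by rw [← hP]; exact a.2
    obtain ⟨i, hi⟩ := Subgroup.mem_zpowers_iff.mp ha
    exact Subgroup.mem_zpowers_iff.mpr ⟨i, Subtype.ext (by push_cast; exact hi)⟩
  -- an element of M of order p^e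
  obtain ⟨g0, hg0⟩ := IsCyclic.exists_generator (α := M)
  have hordg0 : orderOf g0 = Nat.card M := orderOf_eq_card_of_forall_mem_zpowers hg0
  set m : M := g0 ^ (Nat.card M / p ^ e) with hm
  have hordm : orderOf m = p ^ e := by
    rw [hm, orderOf_pow, hordg0, Nat.gcd_eq_right (Nat.div_dvd_of_dvd hdM),
      Nat.div_div_self hdM Nat.card_pos.ne']
  -- the homomorphism from P to M
  have hcond : (zmultiplesHom (Additive M) (Additive.ofMul m)) ((n : ℤ)) = 0 := by
    rw [zmultiplesHom_apply, ← ofMul_zpow, zpow_natCast]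
    have : m ^ n = 1 := orderOf_dvd_iff_pow_eq_one.mp (hordm ▸ hdP)
    rw [this]
    rfl
  set flift : ZMod n →+ Additive M := ZMod.lift n ⟨_, hcond⟩ with hflift
  set φ : Multiplicative (ZMod n) →* M := AddMonoidHom.toMultiplicativeLeft flift with hφ
  set θ : Multiplicative (ZMod n) ≃* ↥(P : Subgroup H) := zmodCyclicMulEquiv hPcyc with hθ
  set ψ : ↥(P : Subgroup H) →* M := φ.comp θ.symm.toMonoidHom with hψ
  have hφval : ∀ v : ℕ, φ (Multiplicative.ofAdd ((v : ZMod n))) = m ^ v := by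
    intro v
    have h1 : ((v : ZMod n)) = (((v : ℤ) : ZMod n)) := by push_cast; rfl
    rw [hφ, AddMonoidHom.coe_toMultiplicativeLeft]
    simp only [Function.comp_apply, toAdd_ofAdd]
    rw [hflift, h1, ZMod.lift_coe, zmultiplesHom_apply, ← ofMul_zpow, zpow_natCast]
    rfl
  -- ψ applied to any element of P whose image under θ.symm is `z` is `m ^ z.val`
  have hψval : ∀ a : ↥(P : Subgroup H), ψ a = m ^ (Multiplicative.toAdd (θ.symm a)).val := by
    intro a
    have h1 : Multiplicative.ofAdd
        (((Multiplicative.toAdd (θ.symm a)).val : ZMod n)) = θ.symm a := by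
      rw [ZMod.natCast_rightInverse (Multiplicative.toAdd (θ.symm a)), ofAdd_toAdd]
    rw [hψ, MonoidHom.comp_apply]
    conv_lhs => rw [MulEquiv.coe_toMonoidHom, ← h1]
    exact hφval _
  -- the order of ψ at the canonical generator
  have hordψx : orderOf (ψ ⟨x, hxP⟩) = p ^ e := by
    have h1 : orderOf ((⟨x, hxP⟩ : ↥(P : Subgroup H))) = n := by
      have := orderOf_injective (P : Subgroup H).subtype Subtype.coe_injective ⟨x, hxP⟩
      simp only [Subgroup.coe_subtype] at this
      rw [← this]
      exact hordx.trans hcardP.symm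
    have h2 : orderOf (θ.symm ⟨x, hxP⟩) = n := by rw [MulEquiv.orderOf_eq]; exact h1
    set z := Multiplicative.toAdd (θ.symm ⟨x, hxP⟩) with hz
    have h3 : addOrderOf z = n := by
      rw [hz, ← orderOf_ofAdd_eq_addOrderOf, ofAdd_toAdd]; exact h2
    have h4 : ((z.val : ZMod n)) = z := ZMod.natCast_rightInverse z
    have h5 : Nat.Coprime n z.val := by
      have h6 : addOrderOf ((z.val : ZMod n)) = n := by rw [h4]; exact h3
      rw [ZMod.addOrderOf_coe _ (NeZero.ne n)] at h6
      have h7 := Nat.gcd_dvd_left n z.val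
      rcases Nat.div_eq_self.mp h6 with h | h
      · exact absurd h (NeZero.ne n)
      · exact h
    have h8 : Nat.Coprime (p ^ e) z.val := Nat.Coprime.coprime_dvd_left hdP h5
    rw [hψval, orderOf_pow, hordm, Nat.Coprime.gcd_eq_one h8, Nat.div_one]
  -- the homomorphism H →* P
  set πP : H →* ↥(P : Subgroup H) :=
    { toFun := fun h => ⟨h ^ t, hmemP h⟩
      map_one' := by simp
      map_mul' := fun a b => Subtype.ext (hmul a b) } with hπP
  set σ0 : H →* M := ψ.comp πP with hσ0
  have hσ0mem : σ0 ∈ actSet p e x := by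
    constructor
    · have h1 : πP x = ⟨x, hxP⟩ := Subtype.ext (hfixP x hxP)
      rw [hσ0, MonoidHom.comp_apply, h1]
      exact hordψx
    · intro y hy
      have h1 : πP y = 1 := by
        apply Subtype.ext
        show y ^ t = ((1 : ↥(P : Subgroup H)) : H)
        rw [hkill y hy]
        rfl
      rw [hσ0, MonoidHom.comp_apply, h1, map_one]
  refine ⟨⟨σ0, hσ0mem⟩, ?_⟩
  -- ## Transitivity
  intro σ hσ ω hω
  -- `ω x` is a power of `σ x` with exponent coprime to p
  have hωmem : ω x ∈ Subgroup.zpowers (σ x) := by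
    set S := Subgroup.zpowers (σ x) with hS
    set T := (powMonoidHom (p ^ e) : M →* M).ker with hT
    have hST : S ≤ T := by
      intro a ha
      obtain ⟨i, hi⟩ := Subgroup.mem_zpowers_iff.mp ha
      rw [hT, MonoidHom.mem_ker, powMonoidHom_apply, ← hi, ← zpow_natCast, ← zpow_mul,
        mul_comm i _, zpow_mul, zpow_natCast]
      have h1 : (σ x) ^ p ^ e = 1 := orderOf_dvd_iff_pow_eq_one.mp (hσ.1 ▸ dvd_refl _)
      rw [h1, one_zpow]
    have hcardS : Nat.card S = p ^ e := by rw [hS, Nat.card_zpowers, hσ.1]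
    have hcardT : Nat.card T ∣ p ^ e := by
      haveI : IsCyclic T := Subgroup.isCyclic T
      obtain ⟨τ, hτ⟩ := IsCyclic.exists_generator (α := T)
      have h1 : orderOf τ = Nat.card T := orderOf_eq_card_of_forall_mem_zpowers hτ
      have h2 : orderOf ((τ : M)) = orderOf τ :=
        orderOf_injective T.subtype Subtype.coe_injective τ
      have h3 : ((τ : M)) ^ p ^ e = 1 := MonoidHom.mem_ker.mp τ.2
      rw [← h1, ← h2]
      exact orderOf_dvd_iff_pow_eq_one.mpr h3
    have hSeqT : S = T := Subgroup.eq_of_le_of_card_ge hST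
      (by rw [hcardS]; exact Nat.le_of_dvd (by positivity) hcardT)
    have hωT : ω x ∈ T := by
      rw [hT, MonoidHom.mem_ker, powMonoidHom_apply]
      exact orderOf_dvd_iff_pow_eq_one.mp (hω.1 ▸ dvd_refl _)
    rw [hSeqT]
    exact hωT
  obtain ⟨u, hu⟩ := (Submonoid.mem_powers_iff _ _).mp
    (mem_powers_iff_mem_zpowers.mpr hωmem)
  have hordu : orderOf ((σ x) ^ u) = p ^ e := by rw [hu]; exact hω.1
  have hgcdu : Nat.gcd (p ^ e) u = 1 := by
    rw [orderOf_pow, hσ.1] at hordu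
    have h1 := Nat.gcd_dvd_left (p ^ e) u
    rcases Nat.div_eq_self.mp hordu with h | h
    · omega
    · exact h
  have hucop : Nat.Coprime u p := by
    have h1 : Nat.Coprime (p ^ e) u := hgcdu
    exact (Nat.Coprime.coprime_dvd_left (dvd_pow_self p (by omega)) h1).symm
  have hu1 : 1 ≤ u := by
    rcases Nat.eq_zero_or_pos u with h | h
    · rw [h] at hgcdu; simp at hgcdu; have := hp.one_lt; omega
    · exact h
  -- the automorphism
  set βh : H →* H :=
    { toFun := fun h => h * (h ^ t) ^ (u - 1)
      map_one' := by simp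
      map_mul' := by
        intro a b
        rw [hmul a b]
        have hab : Commute (a ^ t) (b ^ t) :=
          (Subgroup.mem_center_iff.mp (hcenterpow a) (b ^ t)).symm
        rw [hab.mul_pow]
        have h1 : Commute b ((a ^ t) ^ (u - 1)) :=
          (Subgroup.mem_center_iff.mp
            (Subgroup.pow_mem _ (hcenterpow a) (u - 1)) b)
        calc a * b * ((a ^ t) ^ (u - 1) * (b ^ t) ^ (u - 1))
            = a * (b * (a ^ t) ^ (u - 1)) * (b ^ t) ^ (u - 1) := by group
          _ = a * ((a ^ t) ^ (u - 1) * b) * (b ^ t) ^ (u - 1) := by rw [h1.eq]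
          _ = a * (a ^ t) ^ (u - 1) * (b * (b ^ t) ^ (u - 1)) := by group } with hβh
  have hβval : ∀ h : H, βh h = h * (h ^ t) ^ (u - 1) := fun h => rfl
  have hinj : Function.Injective βh := by
    apply (injective_iff_map_eq_one βh).mpr
    intro a ha
    rw [hβval] at ha
    have h1 : a ^ (1 + t * (u - 1)) = 1 := by
      rw [pow_add, pow_one, pow_mul]
      exact ha
    set w := 1 + t * (u - 1) with hw
    obtain ⟨q, hq⟩ := htk
    have hqt : t = p ^ k * q + 1 := by omega
    have hw2 : w = u + p ^ k * (q * (u - 1)) := by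
      rw [hw, hqt]
      have : (p ^ k * q + 1) * (u - 1) = p ^ k * (q * (u - 1)) + (u - 1) := by ring
      omega
    have hcop1 : Nat.Coprime w (p ^ k) := by
      rw [hw2]
      have h2 : Nat.Coprime u (p ^ k) := (hucop.pow_right k)
      rw [mul_comm (p ^ k) _]
      exact (Nat.coprime_add_mul_right_left u (p ^ k) _).mpr h2
    obtain ⟨s, hs⟩ := htn'
    have hcop2 : Nat.Coprime w n' := by
      have hw3 : w = 1 + n' * (s * (u - 1)) := by rw [hw, hs]; ring_nf
      rw [hw3, mul_comm n' _]
      exact (Nat.coprime_add_mul_right_left 1 n' _).mpr (Nat.coprime_one_left n')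
    have hcopw : Nat.Coprime w N := by
      rw [← hNsplit]
      exact Nat.Coprime.mul_right hcop1 hcop2
    have h3 : orderOf a ∣ w := orderOf_dvd_iff_pow_eq_one.mpr h1
    have h4 : orderOf a ∣ N := orderOf_dvd_natCard a
    have h5 : orderOf a ∣ Nat.gcd w N := Nat.dvd_gcd h3 h4
    rw [hcopw.gcd_eq_one] at h5
    exact orderOf_eq_one_iff.mp (Nat.eq_one_of_dvd_one h5)
  set β : MulAut H := MulEquiv.ofBijective βh (Finite.injective_iff_bijective.mp hinj) with hβ
  refine ⟨β, ?_⟩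
  ext h
  have hβapp : β h = h * (h ^ t) ^ (u - 1) := rfl
  show ω h = σ (β h)
  rw [hβapp]
  obtain ⟨i, hi⟩ := Subgroup.mem_zpowers_iff.mp (hP ▸ hmemP h)
  have hσt : σ (h ^ t) = (σ x) ^ i := by rw [← hi, map_zpow]
  have hωt : ω (h ^ t) = (ω x) ^ i := by rw [← hi, map_zpow]
  have hσkill : σ (h * (h ^ t)⁻¹) = 1 := hσ.2 _ (hcoprimePart h)
  have hσh : σ h = σ (h ^ t) := hvalue σ hσ h
  have hfinal : σ (h * (h ^ t) ^ (u - 1)) = σ (h ^ t) ^ u := by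
    rw [map_mul, map_pow, hσh, ← pow_succ']
    congr 1
    omega
  calc ω h = ω (h ^ t) := hvalue ω hω h
    _ = ((σ x) ^ u) ^ i := by rw [hωt, hu]
    _ = ((σ x) ^ i) ^ u := by
        rw [← zpow_natCast, ← zpow_mul, mul_comm, zpow_mul, zpow_natCast]
    _ = σ (h ^ t) ^ u := by rw [hσt]
    _ = σ (h * (h ^ t) ^ (u - 1)) := hfinal.symm
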